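/- The collection Q_tree is UME-learnable: there exists a sequence of measurable estimators A_n : ({0,1}^V)^n → [0,1]^V (where V is the countable set of vertices of the infinite binary tree) such that for every branch b ∈ {0,1}^ℕ and μ = Prod(q^b), E_{S∼μ^n} ‖A_n(S) − q^b‖_∞ → 0 as n → ∞. -/

import Mathlib

open MeasureTheory Filter

/-- The sup-distance `‖p − q‖_∞ = ⨆ v, |p v − q v|` between two vectors. -/
noncomputable def supDist {ι : Type*} (p q : ι → ℝ) : ℝ := ⨆ j, |p j - q j|

/-- `μ = Prod q`: the product probability measure on `{0,1}^ι` with independent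
coordinates, the `v`-th coordinate having mean `q v`. -/
def IsBernoulliProduct {ι : Type*} (q : ι → ℝ) (μ : Measure (ι → Bool)) : Prop :=
  IsProbabilityMeasure μ ∧
  ∀ (F : Finset ι) (f : ι → Bool),
    μ {x | ∀ j ∈ F, x j = f j} = ∏ j ∈ F, ENNReal.ofReal (if f j then q j else 1 - q j)

/-- The length-`j` prefix of an infinite branch `b ∈ {0,1}^ℕ`, as a vertex of the
infinite binary tree (a finite binary string). -/
def pref (b : ℕ → Bool) (j : ℕ) : List Bool := List.ofFn fun k : Fin j => b k.1

/-- The mean vector of the tree distribution associated to the branch `b`: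
value `2/3` at every vertex lying on the branch (i.e. every prefix of `b`, including the
root), and `1/3` at every other vertex. -/
noncomputable def qBranch (b : ℕ → Bool) : List Bool → ℝ :=
  fun v => if pref b v.length = v then 2 / 3 else 1 / 3


open Finset

lemma binom_term_eq {ι : Type*} [Fintype ι] [DecidableEq ι] (p : ℝ) (t : Finset ι) :
    (∏ c : ι, (if c ∈ t then p else 1 - p))
      = p ^ t.card * (1 - p) ^ (Fintype.card ι - t.card) := by
  rw [Finset.prod_ite, Finset.prod_const, Finset.prod_const, Finset.filter_univ_mem,
    Finset.filter_not, Finset.filter_univ_mem]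
  congr 1
  rw [Finset.card_sdiff_of_subset (Finset.subset_univ t), Finset.card_univ]

lemma count_eq_card {ι : Type*} [Fintype ι] (f : ι → Bool) :
    (∑ c : ι, if f c then 1 else 0) = (Finset.univ.filter (fun c => f c)).card :=
  (Finset.card_filter _ _).symm

lemma binom_tail {Ω : Type*} [MeasurableSpace Ω] (ν : Measure Ω) {ι : Type*} [Fintype ι]
    [DecidableEq ι]
    (X : ι → Ω → Bool) (hX : ∀ c, Measurable (X c)) (p : ℝ)
    (hcyl : ∀ g : ι → Bool, ν {ω | ∀ c, X c ω = g c}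
      = ∏ c, ENNReal.ofReal (if g c then p else 1 - p))
    (hp0 : 0 ≤ p) (hp1 : p ≤ 1) (m : ℕ) :
    ν {ω | m ≤ ∑ c, (if X c ω then 1 else 0)} ≤
      ENNReal.ofReal ((1/2) ^ m * (1 + p) ^ (Fintype.card ι)) := by
  classical
  set N := Fintype.card ι with hN
  set block : Finset ι → Set Ω := fun t => {ω | ∀ c, X c ω = decide (c ∈ t)} with hblock
  have hmeas : ∀ t, MeasurableSet (block t) := by
    intro t
    have : block t = ⋂ c, (X c) ⁻¹' {decide (c ∈ t)} := by
      ext ω; simp [hblock, Set.mem_iInter]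
    rw [this]
    exact MeasurableSet.iInter fun c => hX c (measurableSet_singleton _)
  set T : Finset (Finset ι) := Finset.univ.filter (fun t => m ≤ t.card) with hT
  have key : ∀ (ω : Ω) (t : Finset ι), ω ∈ block t →
      (∑ c, (if X c ω then 1 else 0)) = t.card := by
    intro ω t hω
    have h1 : ∀ c, (if X c ω then (1:ℕ) else 0) = if c ∈ t then 1 else 0 := by
      intro c; rw [hω c]; by_cases h : c ∈ t <;> simp [h]
    rw [Finset.sum_congr rfl (fun c _ => h1 c)]
    conv_rhs => rw [← Finset.filter_univ_mem t]
    rw [Finset.card_filter]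
  have hev : {ω | m ≤ ∑ c, (if X c ω then 1 else 0)} = ⋃ t ∈ T, block t := by
    ext ω
    simp only [Set.mem_setOf_eq, Set.mem_iUnion, hT, Finset.mem_filter, Finset.mem_univ,
      true_and, exists_prop]
    constructor
    · intro hm
      refine ⟨Finset.univ.filter (fun c => X c ω), ?_, ?_⟩
      · rw [← count_eq_card]; exact hm
      · intro c; by_cases h : X c ω <;> simp [hblock, h]
    · rintro ⟨t, htm, hω⟩
      rw [key ω t hω]; exact htm
  have hdisj : Set.PairwiseDisjoint (T : Set (Finset ι)) block := by
    intro t _ t' _ hne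
    refine Set.disjoint_left.mpr (fun ω hω hω' => hne ?_)
    apply Finset.ext
    intro c
    have := (hω c).symm.trans (hω' c)
    simpa using this
  have hblockval : ∀ t : Finset ι,
      ν (block t) = ENNReal.ofReal (p ^ t.card * (1 - p) ^ (N - t.card)) := by
    intro t
    rw [hblock]
    rw [hcyl (fun c => decide (c ∈ t))]
    have h1 : ∀ c : ι, (if decide (c ∈ t) then p else 1 - p) = if c ∈ t then p else 1 - p := by
      intro c; by_cases h : c ∈ t <;> simp [h]
    calc (∏ c, ENNReal.ofReal (if decide (c ∈ t) then p else 1 - p))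
        = ∏ c, ENNReal.ofReal (if c ∈ t then p else 1 - p) := by
          exact Finset.prod_congr rfl fun c _ => by rw [h1 c]
      _ = ENNReal.ofReal (∏ c, (if c ∈ t then p else 1 - p)) := by
          rw [ENNReal.ofReal_prod_of_nonneg]
          intro c _
          by_cases h : c ∈ t <;> simp [h, hp0, hp1] <;> linarith
      _ = ENNReal.ofReal (p ^ t.card * (1 - p) ^ (N - t.card)) := by
          rw [binom_term_eq]
  have hνE : ν {ω | m ≤ ∑ c, (if X c ω then 1 else 0)}
      = ∑ t ∈ T, ENNReal.ofReal (p ^ t.card * (1 - p) ^ (N - t.card)) := by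
    rw [hev, measure_biUnion_finset hdisj (fun t _ => hmeas t)]
    exact Finset.sum_congr rfl fun t _ => hblockval t
  rw [hνE]
  have hterm_nonneg : ∀ t : Finset ι, 0 ≤ p ^ t.card * (1 - p) ^ (N - t.card) := by
    intro t
    have : (0:ℝ) ≤ 1 - p := by linarith
    positivity
  rw [← ENNReal.ofReal_sum_of_nonneg (fun t _ => hterm_nonneg t)]
  apply ENNReal.ofReal_le_ofReal
  -- real inequality
  have step1 : ∑ t ∈ T, p ^ t.card * (1 - p) ^ (N - t.card)
      ≤ ∑ t ∈ T, (1/2) ^ m * ((2*p) ^ t.card * (1 - p) ^ (N - t.card)) := by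
    apply Finset.sum_le_sum
    intro t ht
    have htm : m ≤ t.card := (Finset.mem_filter.mp ht).2
    have h2 : (1:ℝ) ≤ (1/2) ^ m * 2 ^ t.card := by
      rw [one_div, inv_pow, ← div_eq_inv_mul, le_div_iff₀ (by positivity)]
      rw [one_mul]
      exact pow_le_pow_right₀ (by norm_num) htm
    have hnn := hterm_nonneg t
    calc p ^ t.card * (1 - p) ^ (N - t.card)
        = 1 * (p ^ t.card * (1 - p) ^ (N - t.card)) := by ring
      _ ≤ ((1/2) ^ m * 2 ^ t.card) * (p ^ t.card * (1 - p) ^ (N - t.card)) := by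
          apply mul_le_mul_of_nonneg_right h2 hnn
      _ = (1/2) ^ m * ((2*p) ^ t.card * (1 - p) ^ (N - t.card)) := by
          rw [mul_pow]; ring
  have step2 : ∑ t ∈ T, (1/2) ^ m * ((2*p) ^ t.card * (1 - p) ^ (N - t.card))
      ≤ ∑ t : Finset ι, (1/2) ^ m * ((2*p) ^ t.card * (1 - p) ^ (N - t.card)) := by
    apply Finset.sum_le_sum_of_subset_of_nonneg (Finset.subset_univ T)
    intro t _ _
    have h1 : (0:ℝ) ≤ 1 - p := by linarith
    positivity
  have step3 : ∑ t : Finset ι, ((2*p) ^ t.card * (1 - p) ^ (N - t.card)) = (1 + p) ^ N := by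
    have := Finset.prod_add (fun _ : ι => 2*p) (fun _ : ι => 1 - p) Finset.univ
    simp only [Finset.prod_const] at this
    have hc : ∀ t ∈ (Finset.univ : Finset ι).powerset, (2*p) ^ t.card * (1-p) ^ (Finset.univ \ t).card
        = (2*p) ^ t.card * (1-p) ^ (N - t.card) := by
      intro t _
      rw [Finset.card_sdiff_of_subset (Finset.subset_univ t), Finset.card_univ]
    rw [Finset.sum_congr rfl hc] at this
    rw [Finset.powerset_univ] at this
    rw [← this, Finset.card_univ]
    norm_num
    ring_nf
    rfl
  calc ∑ t ∈ T, p ^ t.card * (1 - p) ^ (N - t.card)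
      ≤ ∑ t : Finset ι, (1/2) ^ m * ((2*p) ^ t.card * (1 - p) ^ (N - t.card)) :=
        le_trans step1 step2
    _ = (1/2) ^ m * ∑ t : Finset ι, ((2*p) ^ t.card * (1 - p) ^ (N - t.card)) := by
        rw [Finset.mul_sum]
    _ = (1/2) ^ m * (1 + p) ^ N := by rw [step3]


lemma pi_cyl {q : List Bool → ℝ} {μ : Measure (List Bool → Bool)}
    (H : IsBernoulliProduct q μ) (n h : ℕ) (u : Fin h → List Bool)
    (hu : Function.Injective u) (f : Fin n × Fin h → Bool) :
    Measure.pi (fun _ : Fin n => μ) {S | ∀ c : Fin n × Fin h, S c.1 (u c.2) = f c}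
      = ∏ c : Fin n × Fin h, ENNReal.ofReal (if f c then q (u c.2) else 1 - q (u c.2)) := by
  classical
  haveI : IsProbabilityMeasure μ := H.1
  have hset : {S : Fin n → List Bool → Bool | ∀ c : Fin n × Fin h, S c.1 (u c.2) = f c}
      = Set.pi Set.univ (fun i : Fin n => {x : List Bool → Bool | ∀ j : Fin h, x (u j) = f (i, j)}) := by
    ext S
    simp only [Set.mem_setOf_eq, Set.mem_pi, Set.mem_univ, forall_true_left, Prod.forall]
  rw [hset, Measure.pi_pi]
  have hone : ∀ i : Fin n, μ {x : List Bool → Bool | ∀ j : Fin h, x (u j) = f (i, j)}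
      = ∏ j : Fin h, ENNReal.ofReal (if f (i, j) then q (u j) else 1 - q (u j)) := by
    intro i
    set F : Finset (List Bool) := Finset.image u Finset.univ with hF
    set fi : List Bool → Bool := fun y => if hy : ∃ j, u j = y then f (i, hy.choose) else false
      with hfi
    have hfiu : ∀ j : Fin h, fi (u j) = f (i, j) := by
      intro j
      have hy : ∃ j' : Fin h, u j' = u j := ⟨j, rfl⟩
      rw [hfi]
      simp only [hy, dite_true]
      congr 1
      · exact congrArg (fun j' => (i, j')) (hu hy.choose_spec)
    have hseteq : {x : List Bool → Bool | ∀ j : Fin h, x (u j) = f (i, j)}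
        = {x | ∀ y ∈ F, x y = fi y} := by
      ext x
      simp only [Set.mem_setOf_eq, hF, Finset.mem_image, Finset.mem_univ, true_and]
      constructor
      · rintro hx y ⟨j, rfl⟩
        rw [hx j, hfiu j]
      · intro hx j
        rw [hx (u j) ⟨j, rfl⟩, hfiu j]
    rw [hseteq, H.2 F fi, hF, Finset.prod_image (fun j _ j' _ hjj' => hu hjj')]
    exact Finset.prod_congr rfl fun j _ => by rw [hfiu j]
  rw [Finset.prod_congr rfl (fun i _ => hone i)]
  exact (Fintype.prod_prod_type (fun c : Fin n × Fin h => ENNReal.ofReal (if f c then q (u c.2) else 1 - q (u c.2)))).symm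

def vert' (v : List Bool) (w : Fin v.length → Bool) (j : Fin (v.length + 1)) : List Bool :=
  v ++ List.ofFn (fun k : Fin j.1 => w (Fin.castLE (Nat.lt_succ_iff.mp j.isLt) k))

def pcount (n : ℕ) (S : Fin n → List Bool → Bool) (v : List Bool)
    (w : Fin v.length → Bool) : ℕ :=
  ∑ c : Fin n × Fin (v.length + 1), if S c.1 (vert' v w c.2) then 1 else 0

noncomputable def est (n : ℕ) (S : Fin n → List Bool → Bool) (v : List Bool) : ℝ :=
  if ∃ w : Fin v.length → Bool, (n * (v.length + 1) + 1) / 2 ≤ pcount n S v w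
  then 2/3 else 1/3

lemma measurable_bit {n : ℕ} (i : Fin n) (u : List Bool) :
    Measurable (fun S : Fin n → List Bool → Bool => S i u) :=
  (measurable_pi_apply u).comp (measurable_pi_apply i)

lemma measurable_pcount (n : ℕ) (v : List Bool) (w : Fin v.length → Bool) :
    Measurable (fun S => pcount n S v w) := by
  apply Finset.measurable_sum
  intro c _
  exact (measurable_from_top (f := fun x : Bool => if x then (1:ℕ) else 0)).comp
    (measurable_bit c.1 (vert' v w c.2))

lemma measurableSet_pcount_ge (n : ℕ) (v : List Bool) (w : Fin v.length → Bool) (m : ℕ) :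
    MeasurableSet {S : Fin n → List Bool → Bool | m ≤ pcount n S v w} :=
  (measurable_pcount n v w) measurableSet_Ici

lemma measurableSet_est_cond (n : ℕ) (v : List Bool) :
    MeasurableSet {S : Fin n → List Bool → Bool |
      ∃ w : Fin v.length → Bool, (n * (v.length + 1) + 1) / 2 ≤ pcount n S v w} := by
  have : {S : Fin n → List Bool → Bool |
      ∃ w : Fin v.length → Bool, (n * (v.length + 1) + 1) / 2 ≤ pcount n S v w}
      = ⋃ w : Fin v.length → Bool, {S | (n * (v.length + 1) + 1) / 2 ≤ pcount n S v w} := by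
    ext S; simp
  rw [this]
  exact MeasurableSet.iUnion fun w => measurableSet_pcount_ge n v w _

lemma measurable_est (n : ℕ) : Measurable (est n) := by
  apply measurable_pi_lambda
  intro v
  classical
  have : (fun S => est n S v) = fun S =>
      if S ∈ {S : Fin n → List Bool → Bool |
        ∃ w : Fin v.length → Bool, (n * (v.length + 1) + 1) / 2 ≤ pcount n S v w}
      then (2/3 : ℝ) else 1/3 := by
    ext S; rw [est]; rfl
  rw [this]
  exact Measurable.ite (measurableSet_est_cond n v) measurable_const measurable_const

lemma est_mem_Icc (n : ℕ) (S : Fin n → List Bool → Bool) (v : List Bool) :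
    est n S v ∈ Set.Icc (0:ℝ) 1 := by
  rw [est]; split <;> norm_num



lemma pref_length (b : ℕ → Bool) (j : ℕ) : (pref b j).length = j := List.length_ofFn

lemma pref_add (b : ℕ → Bool) (d j : ℕ) :
    pref b (d + j) = pref b d ++ List.ofFn (fun k : Fin j => b (d + k.1)) := by
  rw [pref, List.ofFn_add]
  rfl

lemma pref_take (b : ℕ → Bool) {d m : ℕ} (h : d ≤ m) : (pref b m).take d = pref b d := by
  obtain ⟨j, rfl⟩ := Nat.exists_eq_add_of_le h
  rw [pref_add]
  have h : List.take (pref b d).length (pref b d ++ List.ofFn (fun k : Fin j => b (d + k.1))) = pref b d := List.take_left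
  rw [pref_length] at h
  exact h


lemma vert_length (v : List Bool) (w : Fin v.length → Bool) (j : Fin (v.length + 1)) :
    (vert' v w j).length = v.length + j.1 := by
  simp [vert']

lemma vert_injective (v : List Bool) (w : Fin v.length → Bool) :
    Function.Injective (vert' v w) := by
  intro j j' hjj'
  have := congrArg List.length hjj'
  rw [vert_length, vert_length] at this
  exact Fin.ext (by omega)

/-- off-branch vertices stay off-branch when extended -/
lemma off_branch_ext (b : ℕ → Bool) (v : List Bool) (hv : pref b v.length ≠ v)
    (w : Fin v.length → Bool) (j : Fin (v.length + 1)) :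
    qBranch b (vert' v w j) = 1/3 := by
  rw [qBranch]
  rw [if_neg]
  intro hcon
  apply hv
  have hlen := vert_length v w j
  rw [hlen] at hcon
  have := congrArg (List.take v.length) hcon
  rw [pref_take b (Nat.le_add_right _ _)] at this
  rw [vert'] at this
  exact this.trans List.take_left

/-- on-branch: following the true branch bits gives branch prefixes -/
lemma on_branch_vert (b : ℕ → Bool) (v : List Bool) (hv : pref b v.length = v)
    (j : Fin (v.length + 1)) :
    vert' v (fun k : Fin v.length => b (v.length + k.1)) j = pref b (v.length + j.1) := by
  rw [pref_add, hv, vert']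
  rfl

lemma on_branch_q (b : ℕ → Bool) (m : ℕ) : qBranch b (pref b m) = 2/3 := by
  rw [qBranch, if_pos]
  rw [pref_length]

lemma chern_real (n d k : ℕ) (hk : 12*k ≤ n) (hk1 : 1 ≤ k) :
    (2:ℝ)^d * ((1/2)^((n*(d+1)+1)/2) * (4/3)^(n*(d+1))) ≤ (1/2)^((k-1)*(d+1)) := by
  set N := n*(d+1) with hN
  set m := (N+1)/2 with hm
  set a := N/2 with ha
  have hA : ((1:ℝ)/2)^m * (4/3)^N ≤ (8/9)^a := by
    rcases Nat.even_or_odd N with ⟨c, hc⟩ | ⟨c, hc⟩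
    · have hmc : m = c := by omega
      have hac : a = c := by omega
      rw [hmc, hac, hc, show c + c = 2*c by ring, pow_mul, ← mul_pow]
      apply pow_le_pow_left₀ (by positivity) (by norm_num)
    · have hmc : m = c + 1 := by omega
      have hac : a = c := by omega
      rw [hmc, hac, hc]
      have e1 : ((1:ℝ)/2)^(c+1) * (4/3)^(2*c+1) = ((1/2) * (4/3)^2)^c * ((1/2)*(4/3)) := by
        rw [pow_succ, pow_succ, pow_mul, mul_pow]
        ring
      rw [e1]
      have e2 : ((1:ℝ)/2) * (4/3)^2 = 8/9 := by norm_num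
      rw [e2]
      nlinarith [pow_nonneg (by norm_num : (0:ℝ) ≤ 8/9) c]
  have hB : ((8:ℝ)/9)^a ≤ ((1/2)^k)^(d+1) := by
    have h6 : 6*(k*(d+1)) ≤ a := by
      have h12 : 12*(k*(d+1)) ≤ N := by
        rw [hN, ← Nat.mul_assoc]; exact Nat.mul_le_mul_right _ hk
      omega
    calc ((8:ℝ)/9)^a ≤ (8/9)^(6*(k*(d+1))) :=
          pow_le_pow_of_le_one (by norm_num) (by norm_num) h6
      _ = ((8/9)^6)^(k*(d+1)) := by rw [← pow_mul]
      _ ≤ ((1:ℝ)/2)^(k*(d+1)) := by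
          apply pow_le_pow_left₀ (by positivity) (by norm_num)
      _ = ((1/2)^k)^(d+1) := by rw [← pow_mul]
  have hsplit : ((1:ℝ)/2)^(k*(d+1)) = (1/2)^d * ((1/2)^((k-1)*(d+1)) * (1/2)) := by
    rw [← pow_succ, ← pow_add]
    congr 1
    have hkk : k*(d+1) = (k-1)*(d+1) + (d+1) := by
      obtain ⟨k', rfl⟩ := Nat.exists_eq_add_of_le hk1
      simp [Nat.add_mul, Nat.add_sub_cancel_left]
      ring
    omega
  calc (2:ℝ)^d * ((1/2)^m * (4/3)^N)
      ≤ (2:ℝ)^d * (8/9)^a := by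
        apply mul_le_mul_of_nonneg_left hA (by positivity)
    _ ≤ (2:ℝ)^d * ((1/2)^k)^(d+1) := by
        apply mul_le_mul_of_nonneg_left hB (by positivity)
    _ = (2:ℝ)^d * ((1/2)^d * ((1/2)^((k-1)*(d+1)) * (1/2))) := by
        rw [← pow_mul, ← hsplit]
    _ = ((1/2)^((k-1)*(d+1)) * (1/2)) * (2 * (1/2))^d := by
        rw [mul_pow]; ring
    _ = (1/2)^((k-1)*(d+1)) * (1/2) := by norm_num
    _ ≤ (1/2)^((k-1)*(d+1)) := by
        nlinarith [pow_nonneg (by norm_num : (0:ℝ) ≤ 1/2) ((k-1)*(d+1))]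

lemma bool_sum_split : ∀ (x : Bool), (if x then (1:ℕ) else 0) + (if !x then 1 else 0) = 1 := by
  decide

lemma bad_vertex_bound (b : ℕ → Bool) {μ : Measure (List Bool → Bool)}
    (H : IsBernoulliProduct (qBranch b) μ) (n : ℕ) (v : List Bool) :
    Measure.pi (fun _ : Fin n => μ) {S | est n S v ≠ qBranch b v}
      ≤ ENNReal.ofReal ((2:ℝ)^v.length *
          ((1/2)^((n*(v.length+1)+1)/2) * (4/3)^(n*(v.length+1)))) := by
  classical
  haveI : IsProbabilityMeasure μ := H.1
  have hbool : ∀ x y : Bool, ((!x) = y) ↔ (x = !y) := by decide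
  have hcard : Fintype.card (Fin n × Fin (v.length+1)) = n*(v.length+1) := by simp
  have hconst_nonneg : (0:ℝ) ≤ (1/2)^((n*(v.length+1)+1)/2) * (4/3)^(n*(v.length+1)) := by
    positivity
  by_cases hv : pref b v.length = v
  · -- on branch
    have hq : qBranch b v = 2/3 := by rw [qBranch, if_pos hv]
    set wb : Fin v.length → Bool := fun k => b (v.length + k.1) with hwb
    have hsub : {S : Fin n → List Bool → Bool | est n S v ≠ qBranch b v}
        ⊆ {S | n*(v.length+1) + 1 - (n*(v.length+1)+1)/2 ≤
            ∑ c : Fin n × Fin (v.length+1), if !(S c.1 (vert' v wb c.2)) then 1 else 0} := by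
      intro S hS
      simp only [Set.mem_setOf_eq] at hS ⊢
      rw [hq, est] at hS
      have hcond : ¬ ∃ w : Fin v.length → Bool, (n*(v.length+1)+1)/2 ≤ pcount n S v w := by
        intro hcon; rw [if_pos hcon] at hS; exact hS rfl
      push_neg at hcond
      have hwb' := hcond wb
      have hsum : pcount n S v wb
          + (∑ c : Fin n × Fin (v.length+1), if !(S c.1 (vert' v wb c.2)) then 1 else 0)
          = n*(v.length+1) := by
        rw [pcount, ← Finset.sum_add_distrib]
        rw [Finset.sum_congr rfl (fun c _ => bool_sum_split (S c.1 (vert' v wb c.2)))]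
        rw [Finset.sum_const, Finset.card_univ, hcard, smul_eq_mul, mul_one]
      omega
    refine le_trans (measure_mono hsub) ?_
    have hb := binom_tail (Measure.pi (fun _ : Fin n => μ))
      (fun (c : Fin n × Fin (v.length+1)) (S : Fin n → List Bool → Bool) =>
        !(S c.1 (vert' v wb c.2)))
      (fun c => (measurable_from_top (f := fun x : Bool => !x)).comp
        (measurable_bit c.1 (vert' v wb c.2)))
      (1/3)
      (fun g => by
        have hset : {ω : Fin n → List Bool → Bool |
            ∀ c : Fin n × Fin (v.length+1), (!(ω c.1 (vert' v wb c.2))) = g c}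
            = {S : Fin n → List Bool → Bool |
                ∀ c : Fin n × Fin (v.length+1), S c.1 (vert' v wb c.2) = !(g c)} := by
          ext S
          simp only [Set.mem_setOf_eq]
          exact forall_congr' fun c => hbool _ _
        rw [hset, pi_cyl H n (v.length+1) (vert' v wb) (vert_injective v wb)
          (fun c => !(g c))]
        refine Finset.prod_congr rfl fun c _ => ?_
        have hqc : qBranch b (vert' v wb c.2) = 2/3 := by
          rw [show (wb : Fin v.length → Bool) = fun k : Fin v.length => b (v.length + k.1) from rfl,
            on_branch_vert b v hv c.2]
          exact on_branch_q b _
        rw [hqc]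
        cases hgc : g c <;> norm_num)
      (by norm_num) (by norm_num)
      (n*(v.length+1) + 1 - (n*(v.length+1)+1)/2)
    refine le_trans hb ?_
    rw [hcard]
    apply ENNReal.ofReal_le_ofReal
    have h1 : ((1:ℝ)/2)^(n*(v.length+1) + 1 - (n*(v.length+1)+1)/2)
        ≤ (1/2)^((n*(v.length+1)+1)/2) :=
      pow_le_pow_of_le_one (by norm_num) (by norm_num) (by omega)
    have h2 : (1:ℝ) ≤ 2^v.length := by
      have := pow_le_pow_left₀ (by norm_num : (0:ℝ) ≤ 1) (by norm_num : (1:ℝ) ≤ 2) v.length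
      simpa using this
    have h43 : ((1:ℝ) + 1/3) = 4/3 := by norm_num
    rw [h43]
    calc ((1:ℝ)/2)^(n*(v.length+1) + 1 - (n*(v.length+1)+1)/2) * (4/3)^(n*(v.length+1))
        ≤ (1/2)^((n*(v.length+1)+1)/2) * (4/3)^(n*(v.length+1)) := by
          apply mul_le_mul_of_nonneg_right h1 (by positivity)
      _ = 1 * ((1/2)^((n*(v.length+1)+1)/2) * (4/3)^(n*(v.length+1))) := by ring
      _ ≤ (2:ℝ)^v.length * ((1/2)^((n*(v.length+1)+1)/2) * (4/3)^(n*(v.length+1))) := by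
          apply mul_le_mul_of_nonneg_right h2 hconst_nonneg
  · -- off branch
    have hq : qBranch b v = 1/3 := by rw [qBranch, if_neg hv]
    have hsub : {S : Fin n → List Bool → Bool | est n S v ≠ qBranch b v}
        ⊆ ⋃ w : Fin v.length → Bool,
            {S | (n*(v.length+1)+1)/2 ≤
              ∑ c : Fin n × Fin (v.length+1), if S c.1 (vert' v w c.2) then 1 else 0} := by
      intro S hS
      simp only [Set.mem_setOf_eq] at hS
      rw [hq, est] at hS
      by_cases hcon : ∃ w : Fin v.length → Bool, (n*(v.length+1)+1)/2 ≤ pcount n S v w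
      · obtain ⟨w, hw⟩ := hcon
        exact Set.mem_iUnion.mpr ⟨w, hw⟩
      · rw [if_neg hcon] at hS; exact absurd rfl hS
    refine le_trans (measure_mono hsub) ?_
    refine le_trans (measure_iUnion_le _) ?_
    have hone : ∀ w : Fin v.length → Bool,
        Measure.pi (fun _ : Fin n => μ)
          {S : Fin n → List Bool → Bool | (n*(v.length+1)+1)/2 ≤
            ∑ c : Fin n × Fin (v.length+1), if S c.1 (vert' v w c.2) then 1 else 0}
        ≤ ENNReal.ofReal ((1/2)^((n*(v.length+1)+1)/2) * (4/3)^(n*(v.length+1))) := by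
      intro w
      have hb := binom_tail (Measure.pi (fun _ : Fin n => μ))
        (fun (c : Fin n × Fin (v.length+1)) (S : Fin n → List Bool → Bool) =>
          S c.1 (vert' v w c.2))
        (fun c => measurable_bit c.1 (vert' v w c.2))
        (1/3)
        (fun g => by
          rw [pi_cyl H n (v.length+1) (vert' v w) (vert_injective v w) g]
          refine Finset.prod_congr rfl fun c _ => ?_
          rw [off_branch_ext b v hv w c.2])
        (by norm_num) (by norm_num)
        ((n*(v.length+1)+1)/2)
      refine le_trans hb ?_
      rw [hcard]
      apply ENNReal.ofReal_le_ofReal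
      have h43 : ((1:ℝ) + 1/3) = 4/3 := by norm_num
      rw [h43]
    rw [tsum_fintype]
    refine le_trans (Finset.sum_le_sum (fun w _ => hone w)) ?_
    rw [Finset.sum_const, Finset.card_univ]
    have hcard2 : Fintype.card (Fin v.length → Bool) = 2^v.length := by simp
    rw [hcard2, nsmul_eq_mul]
    have e1 : ENNReal.ofReal ((2:ℝ)^v.length *
          ((1/2)^((n*(v.length+1)+1)/2) * (4/3)^(n*(v.length+1))))
        = ENNReal.ofReal ((2:ℝ)^v.length) *
          ENNReal.ofReal ((1/2)^((n*(v.length+1)+1)/2) * (4/3)^(n*(v.length+1))) :=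
      ENNReal.ofReal_mul (by positivity)
    rw [e1]
    have e2 : ((2^v.length : ℕ) : ENNReal) = ENNReal.ofReal ((2:ℝ)^v.length) := by
      rw [ENNReal.ofReal_pow (by norm_num : (0:ℝ) ≤ 2), ENNReal.ofReal_ofNat]
      push_cast
      rfl
    rw [e2]

lemma ofReal_half_pow (j : ℕ) : ENNReal.ofReal ((1/2:ℝ)^j) = (2⁻¹ : ENNReal)^j := by
  rw [ENNReal.ofReal_pow (by norm_num)]
  congr 1
  rw [one_div, ENNReal.ofReal_inv_of_pos (by norm_num), ENNReal.ofReal_ofNat]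

lemma total_bad_bound (b : ℕ → Bool) {μ : Measure (List Bool → Bool)}
    (H : IsBernoulliProduct (qBranch b) μ) (n k : ℕ) (hk12 : 12*k ≤ n) (hk3 : 3 ≤ k) :
    Measure.pi (fun _ : Fin n => μ) (⋃ v : List Bool, {S | est n S v ≠ qBranch b v})
      ≤ (2⁻¹ : ENNReal)^(k-1) * 2 := by
  classical
  refine le_trans (measure_iUnion_le _) ?_
  have hvert : ∀ v : List Bool,
      Measure.pi (fun _ : Fin n => μ) {S | est n S v ≠ qBranch b v}
        ≤ (2⁻¹ : ENNReal)^((k-1)*(v.length+1)) := by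
    intro v
    refine le_trans (bad_vertex_bound b H n v) ?_
    rw [← ofReal_half_pow]
    apply ENNReal.ofReal_le_ofReal
    exact chern_real n v.length k hk12 (by omega)
  refine le_trans (ENNReal.tsum_le_tsum hvert) ?_
  -- reindex by sigma of tuples
  have hre : ∑' v : List Bool, (2⁻¹ : ENNReal)^((k-1)*(v.length+1))
      = ∑' x : Σ d : ℕ, (Fin d → Bool), (2⁻¹ : ENNReal)^((k-1)*(x.1+1)) := by
    rw [← Equiv.tsum_eq (List.equivSigmaTuple (α := Bool)).symm
      (fun v : List Bool => (2⁻¹ : ENNReal)^((k-1)*(v.length+1)))]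
    refine tsum_congr fun x => ?_
    congr 2
    simp [List.equivSigmaTuple]
  rw [hre, ENNReal.tsum_sigma']
  have hinner : ∀ d : ℕ, (∑' _ : Fin d → Bool, (2⁻¹ : ENNReal)^((k-1)*(d+1)))
      = (2:ENNReal)^d * (2⁻¹)^((k-1)*(d+1)) := by
    intro d
    rw [tsum_fintype, Finset.sum_const, Finset.card_univ]
    have : Fintype.card (Fin d → Bool) = 2^d := by simp
    rw [this, nsmul_eq_mul]
    push_cast
    rfl
  rw [tsum_congr hinner]
  have hterm : ∀ d : ℕ, (2:ENNReal)^d * (2⁻¹)^((k-1)*(d+1))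
      ≤ (2⁻¹)^(k-1) * (2⁻¹)^d := by
    intro d
    have hexp : 2*d + (k-1) ≤ (k-1)*(d+1) := by
      have h2 : 2 ≤ k - 1 := by omega
      calc 2*d + (k-1) ≤ (k-1)*d + (k-1) := by
            apply Nat.add_le_add_right
            exact Nat.mul_le_mul_right d h2
        _ = (k-1)*(d+1) := by ring
    have hle : (2⁻¹ : ENNReal)^((k-1)*(d+1)) ≤ (2⁻¹)^(2*d + (k-1)) :=
      pow_le_pow_of_le_one zero_le (by simp [ENNReal.inv_le_one]) hexp
    calc (2:ENNReal)^d * (2⁻¹)^((k-1)*(d+1))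
        ≤ (2:ENNReal)^d * (2⁻¹)^(2*d + (k-1)) := by
          exact mul_le_mul' le_rfl hle
      _ = (2:ENNReal)^d * ((2⁻¹)^d * (2⁻¹)^d * (2⁻¹)^(k-1)) := by
          rw [← pow_add, ← pow_add]
          congr 1
          ring
      _ = ((2 * 2⁻¹ : ENNReal))^d * (2⁻¹)^d * (2⁻¹)^(k-1) := by
          rw [mul_pow]
          ring
      _ = (2⁻¹)^(k-1) * (2⁻¹)^d := by
          rw [ENNReal.mul_inv_cancel (by norm_num) (by norm_num)]
          rw [one_pow]
          ring
  refine le_trans (ENNReal.tsum_le_tsum hterm) ?_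
  rw [ENNReal.tsum_mul_left, ENNReal.tsum_geometric]
  apply mul_le_mul' le_rfl
  rw [ENNReal.one_sub_inv_two, inv_inv]

lemma est_values (n : ℕ) (S : Fin n → List Bool → Bool) (v : List Bool) :
    est n S v = 2/3 ∨ est n S v = 1/3 := by
  rw [est]; split
  · left; rfl
  · right; rfl

lemma q_values (b : ℕ → Bool) (v : List Bool) :
    qBranch b v = 2/3 ∨ qBranch b v = 1/3 := by
  rw [qBranch]; split
  · left; norm_num
  · right; norm_num

lemma diff_bound (b : ℕ → Bool) (n : ℕ) (S : Fin n → List Bool → Bool) (v : List Bool) :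
    |est n S v - qBranch b v| ≤ 1/3 := by
  rcases est_values n S v with h1 | h1 <;> rcases q_values b v with h2 | h2 <;>
    rw [h1, h2] <;> norm_num [abs_le]

lemma diff_eq_of_ne (b : ℕ → Bool) (n : ℕ) (S : Fin n → List Bool → Bool) (v : List Bool)
    (h : est n S v ≠ qBranch b v) : |est n S v - qBranch b v| = 1/3 := by
  rcases est_values n S v with h1 | h1 <;> rcases q_values b v with h2 | h2 <;>
    rw [h1, h2] <;> rw [h1, h2] at h <;>
      first | exact absurd rfl h | norm_num [abs_eq (by norm_num : (0:ℝ) ≤ 1/3)]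

lemma supDist_eq (b : ℕ → Bool) (n : ℕ) (S : Fin n → List Bool → Bool) :
    supDist (est n S) (qBranch b)
      = (⋃ v : List Bool, {S' : Fin n → List Bool → Bool | est n S' v ≠ qBranch b v}).indicator
          (fun _ => (1/3:ℝ)) S := by
  by_cases hS : S ∈ ⋃ v : List Bool, {S' : Fin n → List Bool → Bool | est n S' v ≠ qBranch b v}
  · rw [Set.indicator_of_mem hS]
    obtain ⟨v₀, hv₀⟩ := Set.mem_iUnion.mp hS
    rw [supDist]
    apply le_antisymm
    · exact ciSup_le (fun v => diff_bound b n S v)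
    · have hb : BddAbove (Set.range fun v => |est n S v - qBranch b v|) := by
        refine ⟨1/3, ?_⟩
        rintro x ⟨v, rfl⟩
        exact diff_bound b n S v
      have := le_ciSup hb v₀
      rwa [diff_eq_of_ne b n S v₀ hv₀] at this
  · rw [Set.indicator_of_notMem hS]
    have hall : ∀ v, est n S v = qBranch b v := by
      simpa [Set.mem_iUnion] using hS
    have hzero : (fun v => |est n S v - qBranch b v|) = fun _ => (0:ℝ) :=
      funext fun v => by rw [hall v]; simp
    rw [supDist, hzero]
    exact ciSup_const

lemma bad_measurable (b : ℕ → Bool) (n : ℕ) :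
    MeasurableSet (⋃ v : List Bool, {S : Fin n → List Bool → Bool | est n S v ≠ qBranch b v}) := by
  refine MeasurableSet.iUnion fun v => ?_
  have : {S : Fin n → List Bool → Bool | est n S v ≠ qBranch b v}
      = (fun S => est n S v) ⁻¹' ({qBranch b v}ᶜ) := rfl
  rw [this]
  exact ((measurable_pi_apply v).comp (measurable_est n)) (measurableSet_singleton _).compl

lemma integral_supDist (b : ℕ → Bool) (n : ℕ) (μ : Measure (List Bool → Bool)) :
    ∫ S, supDist (est n S) (qBranch b) ∂(Measure.pi fun _ : Fin n => μ)
      = ((Measure.pi fun _ : Fin n => μ)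
          (⋃ v : List Bool, {S : Fin n → List Bool → Bool | est n S v ≠ qBranch b v})).toReal
        * (1/3) := by
  rw [integral_congr_ae (Filter.Eventually.of_forall (fun S => supDist_eq b n S))]
  rw [integral_indicator_const _ (bad_measurable b n)]
  rw [smul_eq_mul]
  rfl

/-- The collection `Q_tree = {Prod (qBranch b) : b ∈ {0,1}^ℕ}` is UME-learnable:
there are measurable estimators `A n : ({0,1}^V)^n → [0,1]^V` such that for every
branch `b` and `μ = Prod (qBranch b)`, the expected sup-distance
`E_{S ∼ μ^n} ‖A n S − qBranch b‖_∞` tends to `0`. -/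
theorem Qtree_UMELearnable :
    ∃ A : (n : ℕ) → (Fin n → (List Bool → Bool)) → List Bool → ℝ,
      (∀ n, Measurable (A n)) ∧
      (∀ n S v, A n S v ∈ Set.Icc (0 : ℝ) 1) ∧
      ∀ b : ℕ → Bool, ∀ μ : Measure (List Bool → Bool), IsBernoulliProduct (qBranch b) μ →
        Tendsto (fun n : ℕ =>
            ∫ S, supDist (A n S) (qBranch b) ∂(Measure.pi fun _ : Fin n => μ))
          atTop (nhds 0) := by
  refine ⟨est, measurable_est, est_mem_Icc, ?_⟩
  intro b μ H
  have hrw : ∀ n : ℕ, ∫ S, supDist (est n S) (qBranch b) ∂(Measure.pi fun _ : Fin n => μ)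
      = ((Measure.pi fun _ : Fin n => μ)
          (⋃ v : List Bool, {S : Fin n → List Bool → Bool | est n S v ≠ qBranch b v})).toReal
        * (1/3) := fun n => integral_supDist b n μ
  have hlow : ∀ n : ℕ,
      (0:ℝ) ≤ ∫ S, supDist (est n S) (qBranch b) ∂(Measure.pi fun _ : Fin n => μ) := by
    intro n; rw [hrw n]; positivity
  have hup : ∀ n : ℕ, 36 ≤ n →
      ∫ S, supDist (est n S) (qBranch b) ∂(Measure.pi fun _ : Fin n => μ)
      ≤ (1/2:ℝ)^(n/12 - 1) * (2/3) := by
    intro n hn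
    rw [hrw n]
    have hk12 : 12*(n/12) ≤ n := by omega
    have hk3 : 3 ≤ n/12 := by omega
    have hb := total_bad_bound b H n (n/12) hk12 hk3
    have hne : ((2⁻¹:ENNReal)^(n/12-1) * 2) ≠ ⊤ := by
      apply ENNReal.mul_ne_top
      · exact ENNReal.pow_ne_top (by simp)
      · norm_num
    have hmono := ENNReal.toReal_mono hne hb
    have htr : ((2⁻¹:ENNReal)^(n/12-1) * 2).toReal = (1/2:ℝ)^(n/12-1) * 2 := by
      rw [ENNReal.toReal_mul, ENNReal.toReal_pow]
      norm_num
    rw [htr] at hmono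
    calc ((Measure.pi fun _ : Fin n => μ)
          (⋃ v : List Bool, {S : Fin n → List Bool → Bool | est n S v ≠ qBranch b v})).toReal
        * (1/3)
        ≤ ((1/2:ℝ)^(n/12-1) * 2) * (1/3) := by
          apply mul_le_mul_of_nonneg_right hmono (by norm_num)
      _ = (1/2:ℝ)^(n/12-1) * (2/3) := by ring
  have h2 : Tendsto (fun n : ℕ => n/12 - 1) atTop atTop := by
    apply Filter.tendsto_atTop_atTop.mpr
    intro c
    exact ⟨12*c + 24, fun a ha => by omega⟩
  have h1 : Tendsto (fun j : ℕ => (1/2:ℝ)^j) atTop (nhds 0) :=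
    tendsto_pow_atTop_nhds_zero_of_lt_one (by norm_num) (by norm_num)
  have hg : Tendsto (fun n : ℕ => (1/2:ℝ)^(n/12 - 1) * (2/3)) atTop (nhds 0) := by
    have := (h1.comp h2).mul_const (2/3:ℝ)
    rw [zero_mul] at this
    exact this
  apply tendsto_of_tendsto_of_tendsto_of_le_of_le' tendsto_const_nhds hg
  · exact Filter.Eventually.of_forall hlow
  · filter_upwards [Filter.eventually_ge_atTop 36] with n hn
    exact hup n hn
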